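/- For each i = 1, 2, let F_i : 𝒞_i → 𝒟_i and G_i : 𝒟_i → 𝒞_i be exact (triangulated) functors between triangulated categories such that G_i is left adjoint to F_i, with counit σ_i : G_i ∘ F_i → id and unit τ_i : id → F_i ∘ G_i. Let P : 𝒞_1 → 𝒞_2 and Q : 𝒟_1 → 𝒟_2 be faithful exact functors, and suppose there are natural isomorphisms φ : Q ∘ F_1 ≅ F_2 ∘ P and ψ : P ∘ G_1 ≅ G_2 ∘ Q such that the induced isomorphism P ∘ G_1 ∘ F_1 ≅ G_2 ∘ F_2 ∘ P is compatible with the counits (P σ_1 equals σ_2 P after composing with this isomorphism) and the induced isomorphism Q ∘ F_1 ∘ G_1 ≅ F_2 ∘ G_2 ∘ Q is compatible with the units (the composite of Q τ_1 with this isomorphism equals τ_2 Q). Then: (1) if F_2 (respectively G_2) is fully faithful, so is F_1 (respectively G_1); (2) if F_2 (respectively G_2) is an equivalence, so is F_1 (respectively G_1). -/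
import Mathlib


/-!
STATEMENT 4: For i = 1, 2, let F_i : 𝒞_i → 𝒟_i and G_i : 𝒟_i → 𝒞_i be exact (triangulated)
functors between triangulated categories with G_i ⊣ F_i (counit σ_i : G_i ∘ F_i → id, unit
τ_i : id → F_i ∘ G_i), let P : 𝒞_1 → 𝒞_2 and Q : 𝒟_1 → 𝒟_2 be faithful exact functors, and
let φ : Q ∘ F_1 ≅ F_2 ∘ P, ψ : P ∘ G_1 ≅ G_2 ∘ Q be natural isomorphisms compatible with
the counits and the units. Then (1) if F_2 (resp. G_2) is fully faithful, so is F_1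
(resp. G_1); (2) if F_2 (resp. G_2) is an equivalence, so is F_1 (resp. G_1).
-/

open CategoryTheory Limits Pretriangulated

universe v₁ v₂ v₃ v₄ u₁ u₂ u₃ u₄

/-- A faithful triangulated functor reflects isomorphisms. -/
lemma faithful_triangulated_reflects_iso
    {C : Type u₁} [Category.{v₁} C] [HasZeroObject C] [Preadditive C] [HasShift C ℤ]
    [∀ n : ℤ, (shiftFunctor C n).Additive] [Pretriangulated C]
    {D : Type u₂} [Category.{v₂} D] [HasZeroObject D] [Preadditive D] [HasShift D ℤ]
    [∀ n : ℤ, (shiftFunctor D n).Additive] [Pretriangulated D]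
    (F : C ⥤ D) [F.CommShift ℤ] [F.IsTriangulated] [F.Faithful]
    {X Y : C} (f : X ⟶ Y) (h : IsIso (F.map f)) : IsIso f := by
  obtain ⟨Z, g, h', mem⟩ := Pretriangulated.distinguished_cocone_triangle f
  have memD := F.map_distinguished _ mem
  have hz : IsZero (F.obj Z) := Pretriangulated.Triangle.isZero₃_of_isIso₁ _ memD h
  have hZ : IsZero Z := by
    rw [IsZero.iff_id_eq_zero] at hz ⊢
    apply F.map_injective
    rw [F.map_id, F.map_zero, hz]
  exact (Pretriangulated.Triangle.isZero₃_iff_isIso₁ _ mem).1 hZ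

theorem fullyFaithful_and_equivalence_transfer
    {C₁ : Type u₁} [Category.{v₁} C₁] [HasZeroObject C₁] [Preadditive C₁] [HasShift C₁ ℤ]
    [∀ n : ℤ, (shiftFunctor C₁ n).Additive] [Pretriangulated C₁]
    {C₂ : Type u₂} [Category.{v₂} C₂] [HasZeroObject C₂] [Preadditive C₂] [HasShift C₂ ℤ]
    [∀ n : ℤ, (shiftFunctor C₂ n).Additive] [Pretriangulated C₂]
    {D₁ : Type u₃} [Category.{v₃} D₁] [HasZeroObject D₁] [Preadditive D₁] [HasShift D₁ ℤ]
    [∀ n : ℤ, (shiftFunctor D₁ n).Additive] [Pretriangulated D₁]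
    {D₂ : Type u₄} [Category.{v₄} D₂] [HasZeroObject D₂] [Preadditive D₂] [HasShift D₂ ℤ]
    [∀ n : ℤ, (shiftFunctor D₂ n).Additive] [Pretriangulated D₂]
    (F₁ : C₁ ⥤ D₁) (G₁ : D₁ ⥤ C₁) (F₂ : C₂ ⥤ D₂) (G₂ : D₂ ⥤ C₂)
    [F₁.CommShift ℤ] [F₁.IsTriangulated] [G₁.CommShift ℤ] [G₁.IsTriangulated]
    [F₂.CommShift ℤ] [F₂.IsTriangulated] [G₂.CommShift ℤ] [G₂.IsTriangulated]
    (adj₁ : G₁ ⊣ F₁) (adj₂ : G₂ ⊣ F₂)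
    (P : C₁ ⥤ C₂) (Q : D₁ ⥤ D₂)
    [P.CommShift ℤ] [P.IsTriangulated] [P.Faithful]
    [Q.CommShift ℤ] [Q.IsTriangulated] [Q.Faithful]
    (φ : F₁ ⋙ Q ≅ P ⋙ F₂) (ψ : G₁ ⋙ P ≅ Q ⋙ G₂)
    -- compatibility with the counits σᵢ = adjᵢ.counit : Fᵢ ⋙ Gᵢ ⟶ 𝟭
    (hσ : ∀ X : C₁, P.map (adj₁.counit.app X) =
      ψ.hom.app (F₁.obj X) ≫ G₂.map (φ.hom.app X) ≫ adj₂.counit.app (P.obj X))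
    -- compatibility with the units τᵢ = adjᵢ.unit : 𝟭 ⟶ Gᵢ ⋙ Fᵢ
    (hτ : ∀ Y : D₁, Q.map (adj₁.unit.app Y) ≫ φ.hom.app (G₁.obj Y) ≫
      F₂.map (ψ.hom.app Y) = adj₂.unit.app (Q.obj Y)) :
    ((F₂.Full ∧ F₂.Faithful) → (F₁.Full ∧ F₁.Faithful)) ∧
    ((G₂.Full ∧ G₂.Faithful) → (G₁.Full ∧ G₁.Faithful)) ∧
    (F₂.IsEquivalence → F₁.IsEquivalence) ∧
    (G₂.IsEquivalence → G₁.IsEquivalence) := by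
  -- transfer of the counit being an isomorphism
  have keyσ : IsIso adj₂.counit → IsIso adj₁.counit := by
    intro h
    have : ∀ X : C₁, IsIso (adj₁.counit.app X) := by
      intro X
      have : IsIso (P.map (adj₁.counit.app X)) := by
        rw [hσ X]; infer_instance
      exact faithful_triangulated_reflects_iso P _ this
    exact NatIso.isIso_of_isIso_app _
  -- transfer of the unit being an isomorphism
  have keyτ : IsIso adj₂.unit → IsIso adj₁.unit := by
    intro h
    have : ∀ Y : D₁, IsIso (adj₁.unit.app Y) := by
      intro Y
      have h1 : IsIso (Q.map (adj₁.unit.app Y) ≫ φ.hom.app (G₁.obj Y) ≫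
          F₂.map (ψ.hom.app Y)) := by
        rw [hτ Y]; infer_instance
      have h2 : IsIso (Q.map (adj₁.unit.app Y)) :=
        @IsIso.of_isIso_comp_right _ _ _ _ _ _ _ _ h1
      exact faithful_triangulated_reflects_iso Q _ h2
    exact NatIso.isIso_of_isIso_app _
  refine ⟨?_, ?_, ?_, ?_⟩
  · rintro ⟨h1, h2⟩
    have : IsIso adj₂.counit := adj₂.counit_isIso_of_R_fully_faithful
    have := keyσ this
    exact ⟨adj₁.fullyFaithfulROfIsIsoCounit.full, adj₁.fullyFaithfulROfIsIsoCounit.faithful⟩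
  · rintro ⟨h1, h2⟩
    have : IsIso adj₂.unit := adj₂.unit_isIso_of_L_fully_faithful
    have := keyτ this
    exact ⟨adj₁.fullyFaithfulLOfIsIsoUnit.full, adj₁.fullyFaithfulLOfIsIsoUnit.faithful⟩
  · intro h
    have hu : IsIso adj₂.unit := inferInstance
    have hc : IsIso adj₂.counit := inferInstance
    have := keyτ hu
    have := keyσ hc
    have : ∀ X, IsIso (adj₁.unit.app X) := fun X => inferInstance
    have : ∀ Y, IsIso (adj₁.counit.app Y) := fun Y => inferInstance
    exact adj₁.toEquivalence.isEquivalence_inverse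
  · intro h
    have hu : IsIso adj₂.unit := inferInstance
    have hc : IsIso adj₂.counit := inferInstance
    have := keyτ hu
    have := keyσ hc
    have : ∀ X, IsIso (adj₁.unit.app X) := fun X => inferInstance
    have : ∀ Y, IsIso (adj₁.counit.app Y) := fun Y => inferInstance
    exact adj₁.toEquivalence.isEquivalence_functor
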